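/- There is a universal constant C > 0 such that for every Y as in the context, every s ∈ ℝ and every τ ∈ [−π,π]: |Y(s+τ) − Y(s) − τ Y'(s)| ≤ C τ² R, |Y(s+τ) − Y(s) − τ Y'(s+τ)| ≤ C τ² R, | |Y(s+τ) − Y(s)| − |τ| |Y'(s)| | ≤ C τ² R, and | |Y(s+τ) − Y(s)| − |τ| |Y'(s+τ)| | ≤ C τ² R, where R = R(s,τ) = ℳY''(s+τ) + |Y''(s+τ)|. -/
import Mathlib


open MeasureTheory Real Filter Topology
open scoped RealInnerProductSpace ENNReal

noncomputable section

abbrev E2 : Type := EuclideanSpace ℝ (Fin 2)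

/-- The centered Hardy–Littlewood maximal function
`ℳg(x) = sup_{r>0} (2r)⁻¹ ∫_{x−r}^{x+r} |g(y)| dy`, valued in `ℝ≥0∞`. -/
def maxFn (g : ℝ → E2) (x : ℝ) : ℝ≥0∞ :=
  ⨆ (r : ℝ) (_ : 0 < r),
    (ENNReal.ofReal (2 * r))⁻¹ * ∫⁻ y in Set.Ioc (x - r) (x + r), (‖g y‖₊ : ℝ≥0∞)

/-- `R(s,τ) = ℳY''(s+τ) + |Y''(s+τ)|`, here as a function of the point `x = s+τ`. -/
def Rfn (g : ℝ → E2) (x : ℝ) : ℝ≥0∞ := maxFn g x + (‖g x‖₊ : ℝ≥0∞)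

/-- Basic Taylor-type estimates in terms of the maximal function of `Y''`. -/
theorem statement2 :
    ∃ C : ℝ, 0 < C ∧
      ∀ (Y Y' Y'' : ℝ → E2),
        Function.Periodic Y (2 * π) →
        (∀ s, HasDerivAt Y (Y' s) s) →
        Continuous Y' →
        LocallyIntegrable Y'' volume →
        (∀ a b : ℝ, a ≤ b → Y' b - Y' a = ∫ u in a..b, Y'' u) →
        ∀ (s τ : ℝ), |τ| ≤ π →
          ENNReal.ofReal ‖Y (s + τ) - Y s - τ • Y' s‖
              ≤ ENNReal.ofReal (C * τ ^ 2) * Rfn Y'' (s + τ) ∧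
          ENNReal.ofReal ‖Y (s + τ) - Y s - τ • Y' (s + τ)‖
              ≤ ENNReal.ofReal (C * τ ^ 2) * Rfn Y'' (s + τ) ∧
          ENNReal.ofReal |‖Y (s + τ) - Y s‖ - |τ| * ‖Y' s‖|
              ≤ ENNReal.ofReal (C * τ ^ 2) * Rfn Y'' (s + τ) ∧
          ENNReal.ofReal |‖Y (s + τ) - Y s‖ - |τ| * ‖Y' (s + τ)‖|
              ≤ ENNReal.ofReal (C * τ ^ 2) * Rfn Y'' (s + τ) := by
  refine ⟨2, two_pos, ?_⟩
  intro Y Y' Y'' hper hderiv hcont hloc hftc s τ hτπ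
  rcases eq_or_ne τ 0 with rfl | hτ0
  · simp
  set x := s + τ with hx
  set r := |τ| with hrdef
  have hr : 0 < r := abs_pos.mpr hτ0
  -- integrability of Y'' on the window
  have hMint : IntegrableOn Y'' (Set.Ioc (x - r) (x + r)) volume :=
    (hloc.integrableOn_isCompact isCompact_Icc).mono_set Set.Ioc_subset_Icc_self
  set M : ℝ := ∫ y in Set.Ioc (x - r) (x + r), ‖Y'' y‖ with hMdef
  -- the window contains uIcc s x
  have hlow : x - r ≤ min s x := by
    rcases abs_cases τ with ⟨h1, h2⟩ | ⟨h1, h2⟩ <;>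
      simp only [le_min_iff, hx, hrdef] <;> constructor <;> linarith
  have hhigh : max s x ≤ x + r := by
    rcases abs_cases τ with ⟨h1, h2⟩ | ⟨h1, h2⟩ <;>
      simp only [max_le_iff, hx, hrdef] <;> constructor <;> linarith
  -- key pointwise bound on differences of Y'
  have key0 : ∀ u v : ℝ, u ≤ v → u ∈ Set.uIcc s x → v ∈ Set.uIcc s x →
      ‖Y' v - Y' u‖ ≤ M := by
    intro u v huv hu hv
    rw [hftc u v huv]
    rw [Set.uIcc, Set.mem_Icc] at hu hv
    calc ‖∫ w in u..v, Y'' w‖ ≤ ∫ w in u..v, ‖Y'' w‖ :=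
          intervalIntegral.norm_integral_le_integral_norm huv
      _ = ∫ w in Set.Ioc u v, ‖Y'' w‖ := intervalIntegral.integral_of_le huv
      _ ≤ M := by
          refine setIntegral_mono_set hMint.norm
            (Filter.Eventually.of_forall fun y => norm_nonneg _)
            (Filter.Eventually.of_forall ?_)
          intro y hy
          rcases hy with ⟨hy1, hy2⟩
          exact ⟨lt_of_le_of_lt (le_trans hlow hu.1) hy1,
            le_trans hy2 (le_trans hv.2 hhigh)⟩
  have hkey : ∀ u v : ℝ, u ∈ Set.uIcc s x → v ∈ Set.uIcc s x →
      ‖Y' v - Y' u‖ ≤ M := by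
    intro u v hu hv
    rcases le_total u v with h | h
    · exact key0 u v h hu hv
    · rw [norm_sub_rev]; exact key0 v u h hv hu
  -- FTC for Y
  have hFTC : (∫ u in s..x, Y' u) = Y x - Y s :=
    intervalIntegral.integral_eq_sub_of_hasDerivAt (fun y _ => hderiv y)
      (hcont.intervalIntegrable s x)
  -- the two error representations
  have hrep : ∀ c : E2, Y x - Y s - τ • c = ∫ u in s..x, (Y' u - c) := by
    intro c
    rw [intervalIntegral.integral_sub (hcont.intervalIntegrable _ _)
        intervalIntegrable_const, intervalIntegral.integral_const, hFTC, hx,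
        add_sub_cancel_left]
  have hbound : ∀ c : E2, (∀ u ∈ Set.uIcc s x, ‖Y' u - c‖ ≤ M) →
      ‖Y x - Y s - τ • c‖ ≤ M * r := by
    intro c hc
    rw [hrep c]
    have := intervalIntegral.norm_integral_le_of_norm_le_const
      (C := M) (a := s) (b := x) (f := fun u => Y' u - c)
      (fun u hu => hc u (Set.uIoc_subset_uIcc hu))
    simpa [hx, hrdef, add_sub_cancel_left] using this
  have hb1 : ‖Y x - Y s - τ • Y' s‖ ≤ M * r :=
    hbound _ fun u hu => hkey s u Set.left_mem_uIcc hu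
  have hb2 : ‖Y x - Y s - τ • Y' x‖ ≤ M * r :=
    hbound _ fun u hu => hkey x u Set.right_mem_uIcc hu
  -- pass to ENNReal via the maximal function
  have hM : ENNReal.ofReal M = ∫⁻ y in Set.Ioc (x - r) (x + r), (‖Y'' y‖₊ : ℝ≥0∞) :=
    ofReal_integral_norm_eq_lintegral_enorm hMint
  have h2r0 : ENNReal.ofReal (2 * r) ≠ 0 :=
    (ENNReal.ofReal_pos.mpr (by positivity)).ne'
  have hmax : (∫⁻ y in Set.Ioc (x - r) (x + r), (‖Y'' y‖₊ : ℝ≥0∞))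
      ≤ ENNReal.ofReal (2 * r) * maxFn Y'' x := by
    have h1 : (ENNReal.ofReal (2 * r))⁻¹ *
        ∫⁻ y in Set.Ioc (x - r) (x + r), (‖Y'' y‖₊ : ℝ≥0∞) ≤ maxFn Y'' x :=
      le_iSup₂ (f := fun (ρ : ℝ) (_ : 0 < ρ) =>
        (ENNReal.ofReal (2 * ρ))⁻¹ *
          ∫⁻ y in Set.Ioc (x - ρ) (x + ρ), (‖Y'' y‖₊ : ℝ≥0∞)) r hr
    calc (∫⁻ y in Set.Ioc (x - r) (x + r), (‖Y'' y‖₊ : ℝ≥0∞))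
        = ENNReal.ofReal (2 * r) * ((ENNReal.ofReal (2 * r))⁻¹ *
            ∫⁻ y in Set.Ioc (x - r) (x + r), (‖Y'' y‖₊ : ℝ≥0∞)) := by
          rw [← mul_assoc, ENNReal.mul_inv_cancel h2r0 ENNReal.ofReal_ne_top, one_mul]
      _ ≤ ENNReal.ofReal (2 * r) * maxFn Y'' x := mul_le_mul_right h1 _
  have hfin : ∀ v : ℝ, v ≤ M * r →
      ENNReal.ofReal v ≤ ENNReal.ofReal (2 * τ ^ 2) * Rfn Y'' x := by
    intro v hv
    calc ENNReal.ofReal v ≤ ENNReal.ofReal (r * M) :=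
          ENNReal.ofReal_le_ofReal (by linarith)
      _ = ENNReal.ofReal r * ENNReal.ofReal M := ENNReal.ofReal_mul hr.le
      _ ≤ ENNReal.ofReal r * (ENNReal.ofReal (2 * r) * maxFn Y'' x) := by
          rw [hM]; exact mul_le_mul_right hmax _
      _ = ENNReal.ofReal (2 * τ ^ 2) * maxFn Y'' x := by
          rw [← mul_assoc, ← ENNReal.ofReal_mul hr.le]
          congr 2
          have : r * (2 * r) = 2 * r ^ 2 := by ring
          rw [this, hrdef, sq_abs]
      _ ≤ ENNReal.ofReal (2 * τ ^ 2) * Rfn Y'' x := mul_le_mul_right le_self_add _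
  have habs1 : |‖Y x - Y s‖ - |τ| * ‖Y' s‖| ≤ M * r := by
    have h := abs_norm_sub_norm_le (Y x - Y s) (τ • Y' s)
    rw [norm_smul, Real.norm_eq_abs] at h
    calc |‖Y x - Y s‖ - |τ| * ‖Y' s‖| ≤ ‖Y x - Y s - τ • Y' s‖ := h
      _ ≤ M * r := hb1
  have habs2 : |‖Y x - Y s‖ - |τ| * ‖Y' x‖| ≤ M * r := by
    have h := abs_norm_sub_norm_le (Y x - Y s) (τ • Y' x)
    rw [norm_smul, Real.norm_eq_abs] at h
    calc |‖Y x - Y s‖ - |τ| * ‖Y' x‖| ≤ ‖Y x - Y s - τ • Y' x‖ := h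
      _ ≤ M * r := hb2
  exact ⟨hfin _ hb1, hfin _ hb2, hfin _ habs1, hfin _ habs2⟩
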